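/- For all integers a, b, m, n, k with k ≥ 1, 0 ≤ a ≤ m, ka ≤ b ≤ n and n ≥ km, the number of lattice paths from (a,b) to (m,n) with unit steps (1,0) and (0,1) that stay weakly above the line y = kx equals the sum over i from 0 to ⌊(b-ka)/(k+1)⌋ of (-1)^i · (n+1-km)/(n+1-k(a+i)) · C(m+n-(k+1)(a+i), m-a-i) · C(b-k(a+i), i), where the equality is of rational numbers. -/

import Mathlib

open Finset

/-- Binomial coefficient `C(a,b)` for integers, with the convention that it is `0` when `b < 0`. -/
def ichoose (a b : ℤ) : ℤ := if 0 ≤ b then (a.toNat.choose b.toNat : ℤ) else 0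

lemma ichoose_zero_right (a : ℤ) : ichoose a 0 = 1 := by simp [ichoose]

lemma ichoose_neg (a b : ℤ) (h : b < 0) : ichoose a b = 0 := by
  simp [ichoose, not_le.2 h]

lemma ichoose_cast (p r : ℕ) : ichoose (p : ℤ) (r : ℤ) = (p.choose r : ℤ) := by
  simp [ichoose]

lemma ichoose_eq_zero_of_lt {t : ℤ} {i : ℕ} (h : t < i) (hi : 1 ≤ i) :
    ichoose t (i : ℤ) = 0 := by
  have h0 : (0:ℤ) ≤ (i:ℤ) := by positivity
  rw [ichoose, if_pos h0]
  have : t.toNat < (i:ℤ).toNat := by omega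
  rw [Int.toNat_natCast] at this
  rw [Int.toNat_natCast]
  simp [Nat.choose_eq_zero_of_lt this]

lemma ichoose_pascal (t : ℤ) (i : ℕ) (h : 0 ≤ t ∨ i ≠ 1) :
    ichoose (t + 1) (i : ℤ) = ichoose t (i : ℤ) + ichoose t ((i : ℤ) - 1) := by
  cases i with
  | zero =>
    simp only [Nat.cast_zero, ichoose_zero_right]
    rw [ichoose_neg t (0 - 1) (by norm_num)]
    ring
  | succ j =>
    by_cases ht : 0 ≤ t
    · have h1 : (((j:ℕ):ℤ) + 1).toNat = j + 1 := by omega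
      have h2 : ((((j:ℕ):ℤ) + 1) - 1).toNat = j := by omega
      have h3 : (t + 1).toNat = t.toNat + 1 := by omega
      push_cast
      rw [ichoose, ichoose, ichoose, if_pos (by positivity), if_pos (by positivity),
        if_pos (by omega : (0:ℤ) ≤ ((j:ℕ):ℤ) + 1 - 1)]
      rw [h1, h2, h3]
      have := Nat.choose_succ_succ t.toNat j
      push_cast [this]
      ring
    · have ht' : t < 0 := by omega
      have hj : 1 ≤ j := by rcases h with h | h <;> omega
      push_cast
      have e1 : ichoose (t+1) ((j:ℤ)+1) = 0 := by
        have := ichoose_eq_zero_of_lt (t := t+1) (i := j+1) (by push_cast; omega) (by omega)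
        push_cast at this; exact this
      have e2 : ichoose t ((j:ℤ)+1) = 0 := by
        have := ichoose_eq_zero_of_lt (t := t) (i := j+1) (by push_cast; omega) (by omega)
        push_cast at this; exact this
      have e3 : ichoose t ((j:ℤ)+1-1) = 0 := by
        have := ichoose_eq_zero_of_lt (t := t) (i := j) (by push_cast; omega) (by omega)
        rw [(by ring : ((j:ℤ)+1-1) = (j:ℤ))]
        exact this
      rw [e1, e2, e3]; ring

def dd (κ q j : ℕ) : ℤ :=
  ichoose ((q:ℤ) + (κ+1)*j - 1) (j : ℤ) - κ * ichoose ((q:ℤ) + (κ+1)*j - 1) ((j:ℤ) - 1)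

lemma dd_zero_right (κ q : ℕ) : dd κ q 0 = 1 := by
  simp only [dd, Nat.cast_zero, mul_zero, add_zero]
  rw [ichoose_zero_right, ichoose_neg _ _ (by norm_num)]
  ring

lemma dd_cast_top (κ q j : ℕ) (hj : 1 ≤ j) :
    dd κ q j = ((q + (κ+1)*j - 1).choose j : ℤ) - κ * ((q + (κ+1)*j - 1).choose (j-1) : ℤ) := by
  have h1 : 1 ≤ q + (κ+1)*j := by nlinarith
  have hq : ((q:ℤ) + (κ+1)*j - 1) = ((q + (κ+1)*j - 1 : ℕ) : ℤ) := by
    push_cast [Nat.cast_sub h1]; ring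
  have hj' : ((j:ℤ) - 1) = ((j - 1 : ℕ) : ℤ) := by omega
  rw [dd, hq, hj', ichoose_cast, ichoose_cast]

lemma choose_key (κ q j : ℕ) (hj : 1 ≤ j) :
    (q + (κ+1)*j - 1).choose j * j = (q + (κ+1)*j - 1).choose (j-1) * (q + κ*j) := by
  set N := q + (κ+1)*j - 1 with hN
  have h1 : N.choose ((j-1) + 1) * ((j-1) + 1) = N.choose (j-1) * (N - (j-1)) :=
    Nat.choose_succ_right_eq N (j-1)
  have h2 : (j-1) + 1 = j := by omega
  have h3 : N - (j-1) = q + κ*j := by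
    have hX : N = κ*j + (q + j - 1) := by rw [hN]; ring_nf; omega
    omega
  rw [h2, h3] at h1
  exact h1
lemma dd_zero_left (κ j : ℕ) (hκ : 1 ≤ κ) (hj : 1 ≤ j) : dd κ 0 j = 0 := by
  rw [dd_cast_top κ 0 j hj]
  have key := choose_key κ 0 j hj
  have : (0 + (κ+1)*j - 1).choose j = (0 + (κ+1)*j - 1).choose (j-1) * κ := by
    have := Nat.eq_of_mul_eq_mul_right (by omega : 0 < j)
      (by rw [key]; ring_nf : (0 + (κ+1)*j - 1).choose j * j
        = ((0 + (κ+1)*j - 1).choose (j-1) * κ) * j)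
    exact this
  rw [this]; push_cast; ring

lemma dd_rec (κ q j : ℕ) (hj : 1 ≤ j) :
    dd κ (q+1) j = dd κ q j + dd κ (q+κ+1) (j-1) := by
  have hmul : (1:ℕ) ≤ (κ+1)*j := Nat.one_le_iff_ne_zero.mpr (Nat.mul_ne_zero (by omega) (by omega))
  have hmul' : (1:ℤ) ≤ ((κ:ℤ)+1)*(j:ℤ) := by exact_mod_cast hmul
  have hX : (0:ℤ) ≤ (q:ℤ) + ((κ:ℤ)+1)*(j:ℤ) - 1 := by linarith
  set X : ℤ := (q:ℤ) + ((κ:ℤ)+1)*(j:ℤ) - 1 with hXdef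
  have cj : ((j-1:ℕ):ℤ) = (j:ℤ)-1 := by omega
  have top1 : ((q+1:ℕ):ℤ) + ((κ:ℤ)+1)*(j:ℤ) - 1 = X + 1 := by rw [hXdef]; push_cast; ring
  have top2 : ((q+κ+1:ℕ):ℤ) + ((κ:ℤ)+1)*((j:ℤ)-1) - 1 = X := by rw [hXdef]; push_cast; ring
  have top0 : (q:ℤ) + ((κ:ℤ)+1)*(j:ℤ) - 1 = X := hXdef.symm
  have p1 : ichoose (X+1) (j:ℤ) = ichoose X (j:ℤ) + ichoose X ((j:ℤ)-1) :=
    ichoose_pascal X j (Or.inl hX)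
  have p2 : ichoose (X+1) ((j:ℤ)-1) = ichoose X ((j:ℤ)-1) + ichoose X ((j:ℤ)-1-1) := by
    have h := ichoose_pascal X (j-1) (Or.inl hX)
    rw [cj] at h
    exact h
  simp only [dd]
  rw [cj, top1, top2, top0, p1, p2]
  ring

lemma key_sum (κ : ℕ) (hκ : 1 ≤ κ) : ∀ R q c : ℕ, q ≤ c →
    ∑ j ∈ range (R+1), (-1:ℤ)^j * dd κ q j * ((c + κ*j).choose (R - j)) = ((c-q).choose R : ℤ) := by
  intro R
  induction R using Nat.strong_induction_on with
  | _ R ihR =>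
    intro q
    induction q with
    | zero =>
      intro c _
      rw [Finset.sum_eq_single_of_mem 0 (by simp)]
      · simp [dd_zero_right]
      · intro j _ hj
        rw [dd_zero_left κ j hκ (by omega)]
        ring
    | succ q ihq =>
      intro c hqc
      rcases R with _ | R'
      · simp [dd_zero_right]
      · have split : ∀ j ∈ range (R'+1+1),
            (-1:ℤ)^j * dd κ (q+1) j * (((c + κ*j).choose (R'+1 - j) : ℕ) : ℤ)
            = (-1:ℤ)^j * dd κ q j * (((c + κ*j).choose (R'+1 - j) : ℕ) : ℤ)
              + (if j = 0 then 0 else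
                  (-1:ℤ)^j * dd κ (q+κ+1) (j-1) * (((c + κ*j).choose (R'+1 - j) : ℕ) : ℤ)) := by
          intro j _
          rcases Nat.eq_zero_or_pos j with hj | hj
          · subst hj; simp [dd_zero_right]
          · rw [if_neg (by omega), dd_rec κ q j hj]
            ring
        rw [Finset.sum_congr rfl split, Finset.sum_add_distrib]
        have first : ∑ j ∈ range (R'+1+1),
            (-1:ℤ)^j * dd κ q j * (((c + κ*j).choose (R'+1 - j) : ℕ) : ℤ)
            = ((c-q).choose (R'+1) : ℤ) := ihq c (by omega)
        have second : ∑ j ∈ range (R'+1+1),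
            (if j = 0 then 0 else
              (-1:ℤ)^j * dd κ (q+κ+1) (j-1) * (((c + κ*j).choose (R'+1 - j) : ℕ) : ℤ))
            = -(((c+κ) - (q+κ+1)).choose R' : ℤ) := by
          rw [Finset.sum_range_succ']
          have reidx : ∀ j ∈ range (R'+1),
              (if j+1 = 0 then 0 else
                (-1:ℤ)^(j+1) * dd κ (q+κ+1) (j+1-1) * (((c + κ*(j+1)).choose (R'+1 - (j+1)) : ℕ) : ℤ))
              = -((-1:ℤ)^j * dd κ (q+κ+1) j * ((((c+κ) + κ*j).choose (R' - j) : ℕ) : ℤ)) := by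
            intro j _
            rw [if_neg (Nat.succ_ne_zero j)]
            have e1 : c + κ*(j+1) = (c+κ) + κ*j := by ring
            have e2 : R'+1 - (j+1) = R' - j := by omega
            have e3 : j+1-1 = j := rfl
            rw [e1, e2, e3]
            ring
          rw [Finset.sum_congr rfl reidx]
          have g0 : (if (0:ℕ) = 0 then (0:ℤ) else
              (-1:ℤ)^(0:ℕ) * dd κ (q+κ+1) (0-1) * (((c + κ*0).choose (R'+1 - 0) : ℕ) : ℤ)) = 0 := rfl
          rw [g0, add_zero, Finset.sum_neg_distrib]
          congr 1
          exact ihR R' (by omega) (q+κ+1) (c+κ) (by omega)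
        rw [first, second]
        obtain ⟨s', hs⟩ : ∃ s', c - q = s'+1 := ⟨c - q - 1, by omega⟩
        have e3 : (c+κ) - (q+κ+1) = s' := by omega
        have e4 : c - (q+1) = s' := by omega
        rw [hs, e3, e4, Nat.choose_succ_succ]
        push_cast
        ring

lemma dd_rat (κ q j : ℕ) (hq : 1 ≤ q) :
    ((q:ℚ) / ((q:ℚ) + κ*j)) * (((q + (κ+1)*j - 1).choose j : ℕ) : ℚ) = ((dd κ q j : ℤ) : ℚ) := by
  rcases Nat.eq_zero_or_pos j with hj | hj
  · subst hj
    simp [dd_zero_right, Nat.choose_zero_right, div_self (by positivity : ((q:ℚ)) ≠ 0)]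
  · rw [dd_cast_top κ q j hj]
    have hden : ((q:ℚ) + κ*j) ≠ 0 := by positivity
    have key := choose_key κ q j hj
    have hQ : ((q + (κ+1)*j - 1).choose j : ℚ) * j
        = ((q + (κ+1)*j - 1).choose (j-1) : ℚ) * ((q:ℚ) + κ*j) := by
      exact_mod_cast key
    rw [div_mul_eq_mul_div, div_eq_iff hden]
    push_cast
    linear_combination (-(κ:ℚ)) * hQ

noncomputable def term (k m n a b : ℤ) (i : ℕ) : ℚ :=
  (-1 : ℚ) ^ i * ((n : ℚ) + 1 - (k : ℚ) * (m : ℚ)) /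
      ((n : ℚ) + 1 - (k : ℚ) * ((a : ℚ) + (i : ℚ))) *
    (ichoose (m + n - (k + 1) * (a + (i : ℤ))) (m - a - (i : ℤ)) : ℚ) *
    (ichoose (b - k * (a + (i : ℤ))) (i : ℤ) : ℚ)

noncomputable def FT (k m n a b : ℤ) : ℚ := ∑ i ∈ range (n.toNat + 2), term k m n a b i

lemma term_zero_big (k m n a b : ℤ) (i : ℕ) (h : m - a < i) : term k m n a b i = 0 := by
  unfold term
  rw [ichoose_neg _ (m - a - (i:ℤ)) (by omega)]
  push_cast
  ring

lemma term_zero_far (k m n a b : ℤ) (i : ℕ) (hk : 1 ≤ k) (hi : 1 ≤ i)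
    (h : b - k*a < (k+1)*i) : term k m n a b i = 0 := by
  unfold term
  have ht : b - k*(a + (i:ℤ)) < (i:ℤ) := by nlinarith [Int.toNat_of_nonneg (by positivity : (0:ℤ) ≤ (i:ℤ))]
  rw [ichoose_eq_zero_of_lt ht hi]
  push_cast
  ring

lemma term_stay (k m n a b : ℤ) (i : ℕ) (hk : 1 ≤ k) (hb : b - k*(a+1) < 0) :
    term k m n a b i = term k m n a (b+1) i := by
  rcases Nat.eq_zero_or_pos i with hi | hi
  · subst hi
    unfold term
    rw [show ((0:ℕ):ℤ) = (0:ℤ) by rfl, ichoose_zero_right, ichoose_zero_right]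
  · unfold term
    have hka : k*(a+1) ≤ k*(a+(i:ℤ)) := by
      have : (1:ℤ) ≤ (i:ℤ) := by exact_mod_cast hi
      nlinarith
    rw [ichoose_eq_zero_of_lt (show b - k*(a+(i:ℤ)) < (i:ℤ) by
        have : (1:ℤ) ≤ (i:ℤ) := by exact_mod_cast hi
        omega) hi]
    rw [ichoose_eq_zero_of_lt (show b + 1 - k*(a+(i:ℤ)) < (i:ℤ) by
        have : (1:ℤ) ≤ (i:ℤ) := by exact_mod_cast hi
        omega) hi]

lemma term_pascal (k m n a b : ℤ) (i : ℕ) (hb : k*(a+1) ≤ b) :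
    term k m n a b (i+1) - term k m n a (b+1) (i+1) = term k m n (a+1) b i := by
  unfold term
  push_cast
  have e1 : m + n - (k+1)*(a + ((i:ℤ)+1)) = m + n - (k+1)*((a+1) + (i:ℤ)) := by ring
  have e2 : m - a - ((i:ℤ)+1) = m - (a+1) - (i:ℤ) := by ring
  have e3 : b - k*(a + ((i:ℤ)+1)) = b - k*((a+1) + (i:ℤ)) := by ring
  have e4 : b + 1 - k*(a + ((i:ℤ)+1)) = (b - k*((a+1) + (i:ℤ))) + 1 := by ring
  have d1 : (n:ℚ) + 1 - (k:ℚ)*((a:ℚ) + ((i:ℚ)+1)) = (n:ℚ) + 1 - (k:ℚ)*(((a:ℚ)+1) + (i:ℚ)) := by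
    ring
  rw [e1, e2, e3, e4, d1]
  have hpas := ichoose_pascal (b - k*((a+1) + (i:ℤ))) (i+1) (by
    rcases Nat.eq_zero_or_pos i with hi | hi
    · left
      subst hi
      have he : k*((a+1) + ((0:ℕ):ℤ)) = k*(a+1) := by norm_num
      linarith [hb, he]
    · right; omega)
  push_cast at hpas
  have e5 : (i:ℤ) + 1 - 1 = (i:ℤ) := by ring
  rw [e5] at hpas
  rw [hpas]
  push_cast
  ring

lemma FT_top (k m n b : ℤ) (hn : k*m ≤ n) : FT k m n m b = 1 := by
  unfold FT
  rw [Finset.sum_eq_single_of_mem 0 (by simp)]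
  · unfold term
    have h0 : m - m - ((0:ℕ):ℤ) = 0 := by push_cast; ring
    have h1 : ((0:ℕ):ℤ) = (0:ℤ) := rfl
    rw [h0, ichoose_zero_right, h1, ichoose_zero_right]
    have hd : (n:ℚ) + 1 - (k:ℚ)*((m:ℚ) + ((0:ℕ):ℚ)) = (n:ℚ) + 1 - (k:ℚ)*(m:ℚ) := by
      push_cast; ring
    rw [hd]
    have hq : (n:ℚ) + 1 - (k:ℚ)*(m:ℚ) ≠ 0 := by
      have : (k*m : ℤ) ≤ n := hn
      have : ((k*m : ℤ) : ℚ) ≤ ((n:ℤ) : ℚ) := by exact_mod_cast this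
      push_cast at this
      nlinarith
    field_simp
    norm_num
  · intro i _ hi
    exact term_zero_big k m n m b i (by omega)

lemma FT_split (k m n a b : ℤ) (hk : 1 ≤ k) (ha : 0 ≤ a) (hb : k*(a+1) ≤ b) (hbn : b ≤ n) :
    FT k m n a b = FT k m n (a+1) b + FT k m n a (b+1) := by
  have h0 : (0:ℤ) ≤ n := by nlinarith
  have key : FT k m n a b - FT k m n a (b+1) = FT k m n (a+1) b := by
    unfold FT
    rw [← Finset.sum_sub_distrib]
    have e0 : n.toNat + 2 = (n.toNat + 1) + 1 := rfl
    rw [e0, Finset.sum_range_succ' (fun i => term k m n a b i - term k m n a (b+1) i) (n.toNat+1)]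
    have hzero : term k m n a b 0 - term k m n a (b+1) 0 = 0 := by
      unfold term
      rw [show ((0:ℕ):ℤ) = (0:ℤ) from rfl, ichoose_zero_right, ichoose_zero_right]
      ring
    rw [hzero, add_zero]
    have hcongr : ∀ i ∈ range (n.toNat + 1),
        term k m n a b (i+1) - term k m n a (b+1) (i+1) = term k m n (a+1) b i :=
      fun i _ => term_pascal k m n a b i hb
    rw [Finset.sum_congr rfl hcongr]
    rw [Finset.sum_range_succ (fun i => term k m n (a+1) b i) (n.toNat+1)]
    have hlast : term k m n (a+1) b (n.toNat+1) = 0 := by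
      apply term_zero_far k m n (a+1) b _ hk (by omega)
      have h1 : ((n.toNat+1 : ℕ) : ℤ) = n + 1 := by omega
      have h2 : k*(a+1) ≥ 0 := by positivity
      nlinarith [h1, h2]
    rw [hlast, add_zero]
  linarith [key]

lemma FT_stay (k m n a b : ℤ) (hk : 1 ≤ k) (hb : b - k*(a+1) < 0) :
    FT k m n a b = FT k m n a (b+1) := by
  unfold FT
  exact Finset.sum_congr rfl (fun i _ => term_stay k m n a b i hk hb)

lemma FT_vanish (k m n a : ℤ) (hk : 1 ≤ k) (ha : 0 ≤ a) (ham : a < m) (hn : k*m ≤ n) :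
    FT k m n a (n+1) = 0 := by
  have hm0 : (0:ℤ) ≤ m := by omega
  have hn0 : (0:ℤ) ≤ n := by nlinarith
  have hmn : m ≤ n := by nlinarith
  set κ := k.toNat with hκdef
  set qn := (n + 1 - k*m).toNat with hqdef
  set Rn := (m - a).toNat with hRdef
  have hκ : (κ:ℤ) = k := Int.toNat_of_nonneg (by omega)
  have hq : (qn:ℤ) = n + 1 - k*m := Int.toNat_of_nonneg (by omega)
  have hR : (Rn:ℤ) = m - a := Int.toNat_of_nonneg (by omega)
  have hκ1 : 1 ≤ κ := by omega
  have hq1 : 1 ≤ qn := by omega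
  have hR1 : 1 ≤ Rn := by omega
  have hRsmall : Rn + 1 ≤ n.toNat + 2 := by omega
  unfold FT
  rw [← Finset.sum_subset (Finset.range_subset_range.mpr hRsmall)
      (fun i _ hi => term_zero_big k m n a (n+1) i (by
        simp only [Finset.mem_range, not_lt] at hi
        omega))]
  rw [← Finset.sum_range_reflect (fun i => term k m n a (n+1) i) (Rn+1)]
  simp only [Nat.add_sub_cancel]
  have hcongr : ∀ j ∈ range (Rn + 1),
      term k m n a (n+1) (Rn - j)
      = (-1:ℚ)^Rn * (((-1:ℤ)^j * dd κ qn j * (((qn + κ*j).choose (Rn - j) : ℕ) : ℤ) : ℤ) : ℚ) := by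
    intro j hj
    rw [Finset.mem_range] at hj
    have hjR : j ≤ Rn := by omega
    have hi : ((Rn - j : ℕ) : ℤ) = m - a - j := by omega
    have hiq : ((Rn - j : ℕ) : ℚ) = ((m:ℚ) - a - j) := by exact_mod_cast congrArg Int.cast hi
    unfold term
    -- rewrite the ichoose arguments
    have hA1 : m + n - (k+1)*(a + ((Rn - j : ℕ) : ℤ)) = ((qn + (κ+1)*j - 1 : ℕ) : ℤ) := by
      have hc : ((qn + (κ+1)*j - 1 : ℕ) : ℤ) = (qn:ℤ) + ((κ:ℤ)+1)*j - 1 := by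
        push_cast [Nat.cast_sub (show 1 ≤ qn + (κ+1)*j by omega)]
        ring
      rw [hc, hi, hq, hκ]
      ring
    have hA2 : m - a - ((Rn - j : ℕ) : ℤ) = ((j:ℕ):ℤ) := by omega
    have hA3 : n + 1 - k*(a + ((Rn - j : ℕ) : ℤ)) = ((qn + κ*j : ℕ) : ℤ) := by
      have hc : ((qn + κ*j : ℕ) : ℤ) = (qn:ℤ) + (κ:ℤ)*j := by push_cast; ring
      rw [hc, hi, hq, hκ]
      ring
    rw [show (n:ℤ) + 1 - k*(a + ((Rn - j : ℕ) : ℤ)) = n + 1 - k*(a + ((Rn - j : ℕ) : ℤ)) from rfl] at hA3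
    have hA3' : (n + 1) - k*(a + ((Rn - j : ℕ) : ℤ)) = ((qn + κ*j : ℕ) : ℤ) := by omega
    rw [hA1, hA2, hA3', ichoose_cast, ichoose_cast]
    -- denominator in ℚ
    have hD : (n:ℚ) + 1 - (k:ℚ)*((a:ℚ) + ((Rn - j : ℕ) : ℚ)) = ((qn:ℚ) + (κ:ℚ)*(j:ℚ)) := by
      have := congrArg (fun z : ℤ => (z:ℚ)) hA3
      push_cast at this
      push_cast
      linarith [this]
    rw [hD]
    -- numerator
    have hQ : (n:ℚ) + 1 - (k:ℚ)*(m:ℚ) = (qn:ℚ) := by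
      have := congrArg (fun z : ℤ => (z:ℚ)) hq
      push_cast at this
      linarith [this]
    rw [hQ]
    -- sign
    have sq : (-1:ℚ)^j * (-1:ℚ)^j = 1 := by
      rw [← mul_pow]; norm_num
    have spl : (-1:ℚ)^(Rn - j) * (-1:ℚ)^j = (-1:ℚ)^Rn := by
      rw [← pow_add]; congr 1; omega
    have s1 : (-1:ℚ)^(Rn - j) = (-1:ℚ)^Rn * (-1:ℚ)^j := by
      rw [← spl, mul_assoc, sq, mul_one]
    rw [s1]
    have hdr := dd_rat κ qn j hq1
    push_cast
    push_cast at hdr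
    linear_combination ((-1:ℚ)^Rn * (-1:ℚ)^j * (((qn + κ*j).choose (Rn - j) : ℕ) : ℚ)) * hdr
  rw [Finset.sum_congr rfl hcongr, ← Finset.mul_sum]
  have : ∑ j ∈ range (Rn+1), (((-1:ℤ)^j * dd κ qn j * (((qn + κ*j).choose (Rn - j) : ℕ) : ℤ) : ℤ) : ℚ)
      = (((0:ℕ).choose Rn : ℕ) : ℚ) := by
    rw [← Int.cast_sum]
    rw [key_sum κ hκ1 Rn qn qn (le_refl qn)]
    norm_num
  rw [this]
  rw [Nat.choose_eq_zero_of_lt (by omega : 0 < Rn)]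
  norm_num

/-- Lattice paths from `(a,b)` to `(m,n)` with unit steps `(1,0)` and `(0,1)`
(encoded as the list of steps, `true` = `(1,0)`, `false` = `(0,1)`) such that every point
`(x,y)` on the path satisfies `y ≥ k*x`, i.e. the path stays weakly above the line `y = kx`. -/
def A (k a b m n : ℤ) : Set (List Bool) :=
  { s | a + (s.count true : ℤ) = m ∧ b + (s.count false : ℤ) = n ∧
        ∀ t, t <+: s → k * (a + (t.count true : ℤ)) ≤ b + (t.count false : ℤ) }


lemma count_tf (s : List Bool) : s.count true + s.count false = s.length := by
  induction s with
  | nil => simp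
  | cons x t ih => cases x <;> simp [List.count_cons] <;> omega

lemma A_finite (k a b m n : ℤ) : (A k a b m n).Finite := by
  apply Set.Finite.subset (List.finite_length_le Bool ((m - a) + (n - b)).toNat)
  rintro s ⟨h1, h2, -⟩
  simp only [Set.mem_setOf_eq]
  have := count_tf s
  omega

lemma A_empty (k a b m n : ℤ) (h : n < b) : A k a b m n = ∅ := by
  ext s
  simp only [A, Set.mem_setOf_eq, Set.mem_empty_iff_false, iff_false]
  rintro ⟨-, h2, -⟩
  omega

lemma A_top (k b m n : ℤ) (hb : k*m ≤ b) (hbn : b ≤ n) :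
    A k m b m n = {List.replicate (n - b).toNat false} := by
  ext s
  simp only [Set.mem_singleton_iff]
  constructor
  · rintro ⟨h1, h2, -⟩
    rw [List.eq_replicate_iff]
    have htrue : s.count true = 0 := by omega
    have hlen : s.length = (n - b).toNat := by have := count_tf s; omega
    refine ⟨hlen, fun x hx => ?_⟩
    cases x
    · rfl
    · exact absurd hx (List.count_eq_zero.mp htrue)
  · rintro rfl
    have hct : (List.replicate (n - b).toNat false).count true = 0 := by
      simp [List.count_replicate]
    have hcf : (List.replicate (n - b).toNat false).count false = (n - b).toNat := by
      simp [List.count_replicate]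
    refine ⟨by omega, by omega, fun t ht => ?_⟩
    have h1 : t.count true ≤ (List.replicate (n - b).toNat false).count true :=
      ht.sublist.count_le true
    have h2 : (0:ℤ) ≤ (t.count false : ℤ) := by positivity
    have h3 : t.count true = 0 := by omega
    rw [h3]
    have he : k * (m + ((0:ℕ):ℤ)) = k * m := by push_cast; ring
    push_cast at he ⊢
    linarith

lemma mem_cons_true (k a b m n : ℤ) (hk : 1 ≤ k) (u : List Bool) :
    (true :: u) ∈ A k a b m n ↔ (k*(a+1) ≤ b ∧ u ∈ A k (a+1) b m n) := by
  have hct : (true :: u).count true = u.count true + 1 := by simp [List.count_cons]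
  have hcf : (true :: u).count false = u.count false := by simp [List.count_cons]
  constructor
  · rintro ⟨h1, h2, h3⟩
    rw [hct] at h1
    rw [hcf] at h2
    have hb : k*(a+1) ≤ b := by
      have := h3 [true] (List.cons_prefix_cons.mpr ⟨rfl, List.nil_prefix⟩)
      simp [List.count_cons] at this
      omega
    refine ⟨hb, by omega, by omega, fun t ht => ?_⟩
    have := h3 (true :: t) (List.cons_prefix_cons.mpr ⟨rfl, ht⟩)
    have hct' : (true :: t).count true = t.count true + 1 := by simp [List.count_cons]
    have hcf' : (true :: t).count false = t.count false := by simp [List.count_cons]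
    rw [hct', hcf'] at this
    have he : k * (a + ((t.count true : ℕ) + 1 : ℤ)) = k * ((a+1) + (t.count true : ℤ)) := by ring
    push_cast at this ⊢
    linarith [he, this]
  · rintro ⟨hb, h1, h2, h3⟩
    refine ⟨by rw [hct]; push_cast; omega, by rw [hcf]; omega, fun t ht => ?_⟩
    rcases t with _ | ⟨x, t'⟩
    · simp only [List.count_nil]
      have : k * a ≤ k * (a+1) := by nlinarith
      push_cast
      linarith
    · rw [List.cons_prefix_cons] at ht
      obtain ⟨rfl, ht'⟩ := ht
      have := h3 t' ht'
      have hct' : (true :: t').count true = t'.count true + 1 := by simp [List.count_cons]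
      have hcf' : (true :: t').count false = t'.count false := by simp [List.count_cons]
      rw [hct', hcf']
      have he : k * (a + ((t'.count true : ℕ) + 1 : ℤ)) = k * ((a+1) + (t'.count true : ℤ)) := by
        ring
      push_cast at this ⊢
      linarith [he, this]

lemma mem_cons_false (k a b m n : ℤ) (u : List Bool) :
    (false :: u) ∈ A k a b m n ↔ (k*a ≤ b ∧ u ∈ A k a (b+1) m n) := by
  have hct : (false :: u).count true = u.count true := by simp [List.count_cons]
  have hcf : (false :: u).count false = u.count false + 1 := by simp [List.count_cons]
  constructor
  · rintro ⟨h1, h2, h3⟩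
    rw [hct] at h1
    rw [hcf] at h2
    have hb : k*a ≤ b := by
      have := h3 [] (List.nil_prefix)
      simp at this
      omega
    refine ⟨hb, by omega, by omega, fun t ht => ?_⟩
    have := h3 (false :: t) (List.cons_prefix_cons.mpr ⟨rfl, ht⟩)
    have hct' : (false :: t).count true = t.count true := by simp [List.count_cons]
    have hcf' : (false :: t).count false = t.count false + 1 := by simp [List.count_cons]
    rw [hct', hcf'] at this
    push_cast at this ⊢
    linarith
  · rintro ⟨hb, h1, h2, h3⟩
    refine ⟨by rw [hct]; omega, by rw [hcf]; push_cast; omega, fun t ht => ?_⟩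
    rcases t with _ | ⟨x, t'⟩
    · simp only [List.count_nil]
      push_cast
      linarith
    · rw [List.cons_prefix_cons] at ht
      obtain ⟨rfl, ht'⟩ := ht
      have := h3 t' ht'
      have hct' : (false :: t').count true = t'.count true := by simp [List.count_cons]
      have hcf' : (false :: t').count false = t'.count false + 1 := by simp [List.count_cons]
      rw [hct', hcf']
      push_cast at this ⊢
      linarith

lemma nil_not_mem (k a b m n : ℤ) (h : a < m) : [] ∉ A k a b m n := by
  rintro ⟨h1, -, -⟩
  simp at h1
  omega

lemma A_decomp_ge (k a b m n : ℤ) (hk : 1 ≤ k) (ham : a < m) (hb : k*(a+1) ≤ b) :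
    A k a b m n = (List.cons true) '' A k (a+1) b m n ∪ (List.cons false) '' A k a (b+1) m n := by
  have hka : k*a ≤ b := by nlinarith
  ext s
  constructor
  · intro hs
    rcases s with _ | ⟨x, u⟩
    · exact absurd hs (nil_not_mem k a b m n ham)
    · cases x
      · right
        exact ⟨u, ((mem_cons_false k a b m n u).mp hs).2, rfl⟩
      · left
        exact ⟨u, ((mem_cons_true k a b m n hk u).mp hs).2, rfl⟩
  · rintro (⟨u, hu, rfl⟩ | ⟨u, hu, rfl⟩)
    · exact (mem_cons_true k a b m n hk u).mpr ⟨hb, hu⟩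
    · exact (mem_cons_false k a b m n u).mpr ⟨hka, hu⟩

lemma A_decomp_lt (k a b m n : ℤ) (hk : 1 ≤ k) (ham : a < m) (hka : k*a ≤ b)
    (hb : b < k*(a+1)) :
    A k a b m n = (List.cons false) '' A k a (b+1) m n := by
  ext s
  constructor
  · intro hs
    rcases s with _ | ⟨x, u⟩
    · exact absurd hs (nil_not_mem k a b m n ham)
    · cases x
      · exact ⟨u, ((mem_cons_false k a b m n u).mp hs).2, rfl⟩
      · exact absurd ((mem_cons_true k a b m n hk u).mp hs).1 (by omega)
  · rintro ⟨u, hu, rfl⟩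
    exact (mem_cons_false k a b m n u).mpr ⟨hka, hu⟩

lemma ncard_decomp_ge (k a b m n : ℤ) (hk : 1 ≤ k) (ham : a < m) (hb : k*(a+1) ≤ b) :
    (A k a b m n).ncard = (A k (a+1) b m n).ncard + (A k a (b+1) m n).ncard := by
  rw [A_decomp_ge k a b m n hk ham hb]
  rw [Set.ncard_union_eq ?disj ((A_finite k (a+1) b m n).image _) ((A_finite k a (b+1) m n).image _)]
  · rw [Set.ncard_image_of_injective _ (List.cons_injective),
      Set.ncard_image_of_injective _ (List.cons_injective)]
  case disj =>
    rw [Set.disjoint_left]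
    rintro s ⟨u, -, rfl⟩ ⟨v, -, hv⟩
    exact absurd hv (by simp)

lemma ncard_decomp_lt (k a b m n : ℤ) (hk : 1 ≤ k) (ham : a < m) (hka : k*a ≤ b)
    (hb : b < k*(a+1)) :
    (A k a b m n).ncard = (A k a (b+1) m n).ncard := by
  rw [A_decomp_lt k a b m n hk ham hka hb]
  exact Set.ncard_image_of_injective _ (List.cons_injective)

lemma main_induction (k m n : ℤ) (hk : 1 ≤ k) (hn : k*m ≤ n) :
    ∀ (meas : ℕ) (a b : ℤ), ((m - a) + (n + 1 - b)).toNat = meas → 0 ≤ a → a ≤ m →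
      k*a ≤ b → b ≤ n + 1 → (b = n + 1 → a < m) →
      ((A k a b m n).ncard : ℚ) = FT k m n a b := by
  intro meas
  induction meas using Nat.strong_induction_on with
  | _ meas ih =>
    intro a b hmeas ha ham hka hb hsp
    by_cases hbn1 : b = n + 1
    · subst hbn1
      rw [A_empty k a (n+1) m n (by omega), FT_vanish k m n a hk ha (hsp rfl) hn]
      simp
    · have hbn : b ≤ n := by omega
      by_cases haem : a = m
      · rw [haem] at hka
        rw [haem, A_top k b m n hka hbn, Set.ncard_singleton, FT_top k m n b hn]
        norm_num
      · have ham' : a < m := lt_of_le_of_ne ham haem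
        by_cases hsplit : k*(a+1) ≤ b
        · rw [ncard_decomp_ge k a b m n hk ham' hsplit]
          push_cast
          rw [ih ((m - (a+1)) + (n + 1 - b)).toNat (by omega) (a+1) b rfl (by omega) (by omega)
              hsplit (by omega) (by omega)]
          rw [ih ((m - a) + (n + 1 - (b+1))).toNat (by omega) a (b+1) rfl ha ham
              (by omega) (by omega) (fun _ => ham')]
          exact (FT_split k m n a b hk ha hsplit hbn).symm
        · rw [ncard_decomp_lt k a b m n hk ham' hka (by omega)]
          rw [ih ((m - a) + (n + 1 - (b+1))).toNat (by omega) a (b+1) rfl ha ham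
              (by omega) (by omega) (fun _ => ham')]
          exact (FT_stay k m n a b hk (by omega)).symm

theorem card_above_eq_sum (a b m n k : ℤ) (hk : 1 ≤ k) (ha : 0 ≤ a) (ham : a ≤ m)
    (hka : k * a ≤ b) (hbn : b ≤ n) (hn : k * m ≤ n) :
    ((A k a b m n).ncard : ℚ) =
      ∑ i ∈ Finset.range ((⌊((b : ℚ) - (k : ℚ) * (a : ℚ)) / ((k : ℚ) + 1)⌋).toNat + 1),
        (-1 : ℚ) ^ i * ((n : ℚ) + 1 - (k : ℚ) * (m : ℚ)) /
            ((n : ℚ) + 1 - (k : ℚ) * ((a : ℚ) + (i : ℚ))) *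
          (ichoose (m + n - (k + 1) * (a + (i : ℤ))) (m - a - (i : ℤ)) : ℚ) *
          (ichoose (b - k * (a + (i : ℤ))) (i : ℤ) : ℚ) := by
  have hn0 : (0:ℤ) ≤ n := by nlinarith
  rw [main_induction k m n hk hn ((m - a) + (n + 1 - b)).toNat a b rfl ha ham hka (by omega)
      (by omega)]
  have hterm : ∀ i : ℕ,
      (-1 : ℚ) ^ i * ((n : ℚ) + 1 - (k : ℚ) * (m : ℚ)) /
            ((n : ℚ) + 1 - (k : ℚ) * ((a : ℚ) + (i : ℚ))) *
          (ichoose (m + n - (k + 1) * (a + (i : ℤ))) (m - a - (i : ℤ)) : ℚ) *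
          (ichoose (b - k * (a + (i : ℤ))) (i : ℤ) : ℚ) = term k m n a b i := fun i => rfl
  rw [Finset.sum_congr rfl (fun i _ => hterm i)]
  set x : ℚ := ((b : ℚ) - (k : ℚ) * (a : ℚ)) / ((k : ℚ) + 1) with hxdef
  have hkq : (1:ℚ) ≤ (k:ℚ) := by exact_mod_cast hk
  have hnum : (0:ℚ) ≤ (b : ℚ) - (k : ℚ) * (a : ℚ) := by
    have : ((k*a : ℤ) : ℚ) ≤ ((b:ℤ) : ℚ) := by exact_mod_cast hka
    push_cast at this
    linarith
  have hden : (0:ℚ) < (k:ℚ) + 1 := by linarith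
  have hx0 : (0:ℚ) ≤ x := div_nonneg hnum (le_of_lt hden)
  have hfl0 : 0 ≤ ⌊x⌋ := Int.floor_nonneg.mpr hx0
  have hxle : x ≤ (b : ℚ) - (k : ℚ) * (a : ℚ) := by
    rw [hxdef]
    exact div_le_self hnum (by linarith)
  have hbn' : ((b:ℚ) - (k:ℚ)*(a:ℚ)) ≤ (n:ℚ) := by
    have h1 : (0:ℚ) ≤ (k:ℚ)*(a:ℚ) := by
      have : (0:ℚ) ≤ (a:ℚ) := by exact_mod_cast ha
      nlinarith
    have h2 : ((b:ℤ):ℚ) ≤ ((n:ℤ):ℚ) := by exact_mod_cast hbn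
    linarith
  have hfln : ⌊x⌋ ≤ n := by
    have : ((⌊x⌋ : ℤ) : ℚ) ≤ ((n:ℤ):ℚ) := by
      calc ((⌊x⌋ : ℤ) : ℚ) ≤ x := Int.floor_le x
        _ ≤ (n:ℚ) := le_trans hxle hbn'
    exact_mod_cast this
  apply (Finset.sum_subset (Finset.range_subset_range.mpr (by omega)) ?van).symm
  intro i _ hi
  rw [Finset.mem_range, not_lt] at hi
  have hi1 : 1 ≤ i := by omega
  apply term_zero_far k m n a b i hk hi1
  have hiq : ((⌊x⌋ : ℚ) + 1) ≤ (i : ℚ) := by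
    have : (⌊x⌋ + 1 : ℤ) ≤ (i : ℤ) := by omega
    exact_mod_cast this
  have hxlt : x < (i : ℚ) := lt_of_lt_of_le (Int.lt_floor_add_one x) hiq
  have : (b : ℚ) - (k : ℚ) * (a : ℚ) < ((k:ℚ) + 1) * (i : ℚ) := by
    have := (div_lt_iff₀ hden).mp (lt_of_le_of_lt (le_of_eq hxdef.symm) hxlt)
    linarith [this]
  have hfin : ((b - k*a : ℤ) : ℚ) < (((k+1)*(i:ℤ) : ℤ) : ℚ) := by
    push_cast
    push_cast at this
    linarith
  exact_mod_cast hfin
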